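/- arXiv:1310.5647 — 4 statements merged into one kernel-verified Lean document; each statement's English description precedes it below -/
import Mathlib

section
/- Let D and D' be two closed disks in the plane with centers o, o' and radii r, r' respectively, with r' ≥ r and o' ∈ D, and suppose D is not contained in D'. Then for any point p on ∂D ∩ ∂D', the angle ∠(o'−o, p−o) is at least π/3. Equivalently, the arc D' ∩ ∂D has angular extent at least 2π/3 and is centered at the direction from o toward o'. -/
open Real

/-- Let `D`, `D'` be closed disks with centers `o`, `o'` and radii `r ≤ r'`, with `o' ∈ D`
and `D ⊄ D'`.  Then for any point `p ∈ ∂D ∩ ∂D'`, the angle at `o` between `o'` and `p`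
is at least `π/3` (so the arc `D' ∩ ∂D` has angular extent at least `2π/3`, centered at
the direction from `o` toward `o'`). -/
theorem stmt_4 (o o' p : EuclideanSpace ℝ (Fin 2)) (r r' : ℝ) (hr : 0 < r) (hrr : r ≤ r')
    (ho' : o' ∈ Metric.closedBall o r)
    (hnot : ¬ Metric.closedBall o r ⊆ Metric.closedBall o' r')
    (hp : dist o p = r) (hp' : dist o' p = r') :
    π / 3 ≤ EuclideanGeometry.angle o' o p := by
  have hd : dist o o' ≤ r := by simpa [dist_comm] using ho'
  set a := o' - o with ha
  set b := p - o with hb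
  have hna : ‖a‖ = dist o o' := by rw [ha, dist_comm, dist_eq_norm]
  have hnb : ‖b‖ = r := by rw [hb, ← hp, dist_eq_norm, norm_sub_rev]
  have hab : ‖a - b‖ = r' := by
    have : a - b = o' - p := by rw [ha, hb]; abel
    rw [this, ← hp', dist_eq_norm]
  have hinner : (inner ℝ a b : ℝ) = (‖a‖ ^ 2 + ‖b‖ ^ 2 - ‖a - b‖ ^ 2) / 2 := by
    have := norm_sub_sq_real a b
    linarith
  have key : (inner ℝ a b : ℝ) ≤ 1 / 2 * (‖a‖ * ‖b‖) := by
    rw [hinner, hnb, hab, hna]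
    have hd0 : 0 ≤ dist o o' := dist_nonneg
    nlinarith [sq_nonneg (dist o o')]
  have hquot : (inner ℝ a b : ℝ) / (‖a‖ * ‖b‖) ≤ 1 / 2 := by
    rcases eq_or_lt_of_le (norm_nonneg a) with h0 | h0
    · simp [← h0]
    · rw [div_le_iff₀ (mul_pos h0 (by rw [hnb]; exact hr))]
      linarith
  have anti : ∀ x y : ℝ, x ≤ y → Real.arccos y ≤ Real.arccos x := fun x y h => by
    unfold Real.arccos; linarith [Real.monotone_arcsin h]
  have : EuclideanGeometry.angle o' o p = Real.arccos ((inner ℝ a b : ℝ) / (‖a‖ * ‖b‖)) := by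
    rfl
  rw [this]
  have h3 : Real.arccos (1 / 2) = π / 3 := by
    rw [show (1:ℝ)/2 = Real.cos (π/3) by rw [Real.cos_pi_div_three]]
    exact Real.arccos_cos (by positivity) (by linarith [Real.pi_pos])
  calc π / 3 = Real.arccos (1/2) := h3.symm
    _ ≤ _ := anti _ _ hquot
end

section
/- Let D be a disk of radius r centered at o, and let γ₁ be a circular arc of ∂D of angular extent π/3 bounding a sector D₁ with apex o. Let D' be a disk with center o' ∉ D₁. Then D' ∩ γ₁ is either empty, or a union of at most two subarcs of γ₁, each containing an endpoint of γ₁; in particular D' ∩ γ₁ never is a nonempty arc contained in the relative interior of γ₁. -/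
open Real

lemma cos_aux (a b c : ℝ) (hab : a ≤ b) (hbc : b ≤ c)
    (ha : 0 < a) (hc : c < 2*π) :
    Real.cos b ≤ max (Real.cos a) (Real.cos c) := by
  rcases le_total b π with hb | hb
  · exact le_max_of_le_left (Real.cos_le_cos_of_nonneg_of_le_pi ha.le hb hab)
  · apply le_max_of_le_right
    have h1 : Real.cos b = Real.cos (2*π - b) := by rw [Real.cos_sub]; simp
    have h2 : Real.cos c = Real.cos (2*π - c) := by rw [Real.cos_sub]; simp
    rw [h1, h2]
    exact Real.cos_le_cos_of_nonneg_of_le_pi (by linarith) (by linarith) (by linarith)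

lemma key_cos (a b c : ℝ) (hab : a ≤ b) (hbc : b ≤ c) (hca : c - a < 2*π)
    (h : ∀ k : ℤ, ¬ (a ≤ 2*π*k ∧ 2*π*k ≤ c)) :
    Real.cos b ≤ max (Real.cos a) (Real.cos c) := by
  have hπ := Real.pi_pos
  set k : ℤ := ⌊a / (2*π)⌋ with hk
  have h2π : (0:ℝ) < 2*π := by linarith
  have hk1 : 2*π*k ≤ a := by
    rw [mul_comm]
    exact (le_div_iff₀ h2π).mp (Int.floor_le _)
  have hk2 : a < 2*π*(k+1) := by
    have := (div_lt_iff₀ h2π).mp (Int.lt_floor_add_one (a / (2*π)))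
    push_cast at this ⊢; linarith
  have hk1' : 2*π*k < a := by
    rcases lt_or_eq_of_le hk1 with h' | h'
    · exact h'
    · exact absurd ⟨h'.ge, by linarith⟩ (h k)
  have hk2' : c < 2*π*(k+1) := by
    by_contra hcon
    push_neg at hcon
    exact h (k+1) ⟨by push_cast; linarith, by push_cast at hcon ⊢; linarith⟩
  have per : ∀ x : ℝ, Real.cos x = Real.cos (x - 2*π*k) := by
    intro x
    rw [show x - 2*π*k = x + (-k : ℤ) * (2*π) by push_cast; ring]
    exact (Real.cos_add_int_mul_two_pi x (-k)).symm
  rw [per a, per b, per c]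
  push_cast at hk2'
  exact cos_aux _ _ _ (by linarith) (by linarith) (by linarith) (by linarith)

lemma dist_formula (o : ℂ) (r s φ θ : ℝ) :
    dist (o + (r:ℂ) * Complex.exp ((θ:ℂ) * Complex.I)) (o + (s:ℂ) * Complex.exp ((φ:ℂ) * Complex.I)) ^ 2
      = r^2 + s^2 - 2*r*s*Real.cos (θ - φ) := by
  rw [Complex.dist_eq, Complex.sq_norm, Complex.normSq_apply]
  simp [Complex.exp_ofReal_mul_I_re, Complex.exp_ofReal_mul_I_im, Complex.add_re, Complex.add_im,
    Complex.mul_re, Complex.mul_im, Real.cos_sub]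
  nlinarith [Real.sin_sq_add_cos_sq θ, Real.sin_sq_add_cos_sq φ]

/-- Let `D` be the disk of radius `r` centered at `o`, `D₁` the sector of `D` with apex `o`
spanned by directions with angle in `[α, α+π/3]`, and `γ₁` its circular boundary arc.
Let `D'` be a disk centered at `o' ∈ D` with `o' ∉ D₁`.  Then `D' ∩ γ₁` is either empty or
a union of at most two subarcs each containing an endpoint of `γ₁`: every point of
`D' ∩ γ₁` is joined to one of the endpoints of `γ₁` by a subarc contained in `D'`.
In particular `D' ∩ γ₁` is never a nonempty arc contained in the relative interior of `γ₁`.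
(The plane is modelled by `ℂ`.) -/
theorem stmt_6 (o o' : ℂ) (r r' α : ℝ) (hr : 0 < r)
    (hoD : dist o' o ≤ r)
    (ho' : ¬ ∃ t θ : ℝ, 0 ≤ t ∧ t ≤ r ∧ θ ∈ Set.Icc α (α + π / 3) ∧
      o' = o + (t : ℂ) * Complex.exp ((θ : ℂ) * Complex.I)) :
    ∀ θ ∈ Set.Icc α (α + π / 3),
      o + (r : ℂ) * Complex.exp ((θ : ℂ) * Complex.I) ∈ Metric.closedBall o' r' →
        (∀ θ' ∈ Set.Icc α θ,
            o + (r : ℂ) * Complex.exp ((θ' : ℂ) * Complex.I) ∈ Metric.closedBall o' r') ∨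
          (∀ θ' ∈ Set.Icc θ (α + π / 3),
            o + (r : ℂ) * Complex.exp ((θ' : ℂ) * Complex.I) ∈ Metric.closedBall o' r') := by
  have hπ := Real.pi_pos
  set s : ℝ := ‖o' - o‖ with hs_def
  set φ : ℝ := (o' - o).arg with hφ_def
  have hsr : s ≤ r := by rwa [Complex.dist_eq] at hoD
  have ho'eq : o' = o + (s:ℂ) * Complex.exp ((φ:ℂ) * Complex.I) := by
    rw [hs_def, hφ_def, Complex.norm_mul_exp_arg_mul_I]; ring
  have hs : 0 < s := by
    rcases (norm_nonneg (o' - o)).lt_or_eq with h | h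
    · exact h
    · exfalso
      apply ho'
      refine ⟨0, α, le_refl 0, hr.le, ⟨le_refl α, by linarith⟩, ?_⟩
      have : o' - o = 0 := by
        rwa [← norm_eq_zero, ← hs_def, eq_comm]
      simp [sub_eq_zero.mp this]
  -- no angle of the sector is congruent to φ mod 2π
  have hφ : ∀ θ'' ∈ Set.Icc α (α + π / 3), ∀ m : ℤ, θ'' - φ ≠ 2*π*m := by
    intro θ'' hθ'' m heq
    apply ho'
    refine ⟨s, θ'', hs.le, hsr, hθ'', ?_⟩
    rw [ho'eq]
    congr 2
    have : (θ'' : ℂ) = (φ : ℂ) + (m : ℂ) * (2*π) := by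
      have : θ'' = φ + 2*π*m := by linarith [sub_eq_iff_eq_add.mp heq]
      push_cast [this]; ring
    rw [this, add_mul, Complex.exp_add]
    rw [show ((m:ℂ) * (2*(π:ℂ))) * Complex.I = (m:ℂ) * (2*(π:ℂ)*Complex.I) by ring,
      Complex.exp_int_mul_two_pi_mul_I]
    ring
  -- monotonicity of the distance in terms of the cosine
  have mono : ∀ θ₁ θ₂ : ℝ, Real.cos (θ₂ - φ) ≤ Real.cos (θ₁ - φ) →
      dist (o + (r:ℂ) * Complex.exp ((θ₁:ℂ) * Complex.I)) o' ≤
      dist (o + (r:ℂ) * Complex.exp ((θ₂:ℂ) * Complex.I)) o' := by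
    intro θ₁ θ₂ hcos
    have e1 := dist_formula o r s φ θ₁
    have e2 := dist_formula o r s φ θ₂
    rw [← ho'eq] at e1 e2
    have hsq : dist (o + (r:ℂ) * Complex.exp ((θ₁:ℂ) * Complex.I)) o' ^ 2 ≤
        dist (o + (r:ℂ) * Complex.exp ((θ₂:ℂ) * Complex.I)) o' ^ 2 := by
      rw [e1, e2]; nlinarith [mul_pos hr hs]
    nlinarith [dist_nonneg (x := o + (r:ℂ) * Complex.exp ((θ₁:ℂ) * Complex.I)) (y := o'),
      dist_nonneg (x := o + (r:ℂ) * Complex.exp ((θ₂:ℂ) * Complex.I)) (y := o')]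
  intro θ hθ hmem
  by_contra hcon
  push_neg at hcon
  obtain ⟨⟨θ₁, hθ₁, h1⟩, ⟨θ₂, hθ₂, h2⟩⟩ := hcon
  rw [Metric.mem_closedBall] at hmem h1 h2
  push_neg at h1 h2
  -- from h1 : r' < dist …θ₁…, hmem : dist …θ… ≤ r'
  have hc1 : Real.cos (θ₁ - φ) < Real.cos (θ - φ) := by
    by_contra hcc
    push_neg at hcc
    exact absurd (le_trans (mono θ₁ θ hcc) hmem) (not_le.mpr h1)
  have hc2 : Real.cos (θ₂ - φ) < Real.cos (θ - φ) := by
    by_contra hcc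
    push_neg at hcc
    exact absurd (le_trans (mono θ₂ θ hcc) hmem) (not_le.mpr h2)
  have hkey := key_cos (θ₁ - φ) (θ - φ) (θ₂ - φ)
    (by linarith [hθ₁.2]) (by linarith [hθ₂.1])
    (by
      have := hθ₁.1
      have := hθ₂.2
      linarith [Real.pi_pos])
    (by
      intro k ⟨ha, hb⟩
      refine hφ (φ + 2*π*k) ⟨?_, ?_⟩ k (by ring)
      · linarith [hθ₁.1]
      · linarith [hθ₂.2])
  rcases max_cases (Real.cos (θ₁ - φ)) (Real.cos (θ₂ - φ)) with ⟨he, _⟩ | ⟨he, _⟩ <;>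
    rw [he] at hkey <;> linarith
end

section
/- Let r₀ > r > 0 and let K = e ⊕ D(r) be the Minkowski sum of a segment e with a closed disk of radius r, and let D₀ be a closed disk of radius r₀ centered at c. Write D₀ = D₀* ⊕ D(r) where D₀* is the disk of radius r₀ − r centered at c. If D₀* ∩ e = ∅ then ∂D₀ and ∂K intersect in at most two points. -/
open Pointwise Metric Complex Set

namespace Stmt10

namespace Complex

noncomputable def abs : AbsoluteValue ℂ ℝ where
  toFun z := ‖z‖
  map_mul' := _root_.norm_mul
  nonneg' := _root_.norm_nonneg
  eq_zero' _ := _root_.norm_eq_zero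
  add_le' := _root_.norm_add_le

lemma norm_eq_abs (z : ℂ) : ‖z‖ = abs z := rfl

lemma dist_eq (z w : ℂ) : dist z w = abs (z - w) := _root_.Complex.dist_eq z w

lemma abs_conj (z : ℂ) : abs ((starRingEnd ℂ) z) = abs z := _root_.Complex.norm_conj z

lemma re_le_abs (z : ℂ) : z.re ≤ abs z := _root_.Complex.re_le_norm z

lemma sq_abs (z : ℂ) : abs z ^ 2 = _root_.Complex.normSq z := _root_.Complex.sq_norm z

lemma normSq_eq_abs (z : ℂ) : _root_.Complex.normSq z = abs z ^ 2 :=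
  _root_.Complex.normSq_eq_norm_sq z

lemma abs_ofReal (r : ℝ) : abs (r : ℂ) = |r| := _root_.Complex.norm_real r

lemma abs_exp_ofReal_mul_I (x : ℝ) : abs (_root_.Complex.exp (x * _root_.Complex.I)) = 1 :=
  _root_.Complex.norm_exp_ofReal_mul_I x

lemma abs_mul_exp_arg_mul_I (x : ℂ) :
    ((abs x : ℝ) : ℂ) * _root_.Complex.exp (_root_.Complex.arg x * _root_.Complex.I) = x :=
  _root_.Complex.norm_mul_exp_arg_mul_I x

lemma ext_abs_arg {x y : ℂ} (h₁ : abs x = abs y) (h₂ : x.arg = y.arg) : x = y :=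
  _root_.Complex.ext_norm_arg h₁ h₂

lemma continuous_abs : Continuous abs := continuous_norm

end Complex

attribute [local simp] Complex.norm_eq_abs Complex.abs_conj Complex.abs_ofReal
  Complex.abs_exp_ofReal_mul_I

noncomputable def dt (z w : ℂ) : ℝ := (z * (starRingEnd ℂ) w).re

lemma dt_eq (z w : ℂ) : dt z w = z.re * w.re + z.im * w.im := by
  simp only [dt, Complex.mul_re, Complex.conj_re, Complex.conj_im]; ring

lemma dt_le (z w : ℂ) : dt z w ≤ Complex.abs z * Complex.abs w := by
  calc (z * (starRingEnd ℂ) w).re ≤ Complex.abs (z * (starRingEnd ℂ) w) := Complex.re_le_abs _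
  _ = Complex.abs z * Complex.abs w := by rw [map_mul, Complex.abs_conj]

lemma sq_abs_sub (z w : ℂ) :
    Complex.abs (z - w) ^ 2 = Complex.abs z ^ 2 - 2 * dt z w + Complex.abs w ^ 2 := by
  simp only [Complex.sq_abs, Complex.normSq_sub, dt]; ring

lemma mem_K {a b : ℂ} {r : ℝ} {y q : ℂ} (hq : q ∈ segment ℝ a b) (h : dist y q ≤ r) :
    y ∈ segment ℝ a b + Metric.closedBall (0 : ℂ) r := by
  exact ⟨q, hq, y - q, by simpa [Complex.dist_eq] using h, by ring⟩

lemma not_mem_K {a b : ℂ} {r : ℝ} {y : ℂ} (h : ∀ q ∈ segment ℝ a b, r < dist y q) :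
    y ∉ segment ℝ a b + Metric.closedBall (0 : ℂ) r := by
  rintro ⟨q, hq, d, hd, rfl⟩
  have := h q hq
  simp only [Complex.dist_eq, mem_closedBall, dist_zero_right] at this hd
  have : Complex.abs d ≤ r := by simpa using hd
  have h2 := h q hq
  rw [show q + d - q = d by ring] at *
  simp only [Complex.dist_eq, show q + d - q = d by ring] at h2
  linarith


lemma isCompact_seg (a b : ℂ) : IsCompact (segment ℝ a b) := by
  rw [segment_eq_image ℝ a b]
  exact isCompact_Icc.image (by continuity)

lemma frontier_K {a b : ℂ} {r : ℝ} (hr : 0 < r) {x : ℂ}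
    (hx : x ∈ frontier (segment ℝ a b + Metric.closedBall (0 : ℂ) r)) :
    ∃ p ∈ segment ℝ a b, dist x p = r ∧ ∀ q ∈ segment ℝ a b, dt (x - p) (q - p) ≤ 0 := by
  have hKcl : IsClosed (segment ℝ a b + Metric.closedBall (0 : ℂ) r) :=
    ((isCompact_seg a b).add (isCompact_closedBall 0 r)).isClosed
  have hxK : x ∈ segment ℝ a b + Metric.closedBall (0 : ℂ) r :=
    hKcl.closure_eq ▸ hx.1
  -- nearest point p
  obtain ⟨p, hp, hmin⟩ := (isCompact_seg a b).exists_isMinOn (s := segment ℝ a b)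
    ⟨a, left_mem_segment ℝ a b⟩ (continuous_const.dist continuous_id).continuousOn
    (f := fun q => dist x q)
  refine ⟨p, hp, ?_, ?_⟩
  · -- dist x p = r
    have hle : dist x p ≤ r := by
      obtain ⟨q, hq, d, hd, rfl⟩ := hxK
      have h1 : dist (q + d) q ≤ r := by
        simpa [Complex.dist_eq, show q + d - q = d by ring] using (by simpa using hd : Complex.abs d ≤ r)
      exact le_trans (hmin hq) h1
    have hge : r ≤ dist x p := by
      by_contra hlt
      push_neg at hlt
      have hint : x ∈ interior (segment ℝ a b + Metric.closedBall (0 : ℂ) r) := by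
        rw [mem_interior]
        refine ⟨Metric.ball x (r - dist x p), ?_, Metric.isOpen_ball, by simp [hr, hlt]⟩
        intro y hy
        have : dist y p ≤ r := by
          have := Metric.mem_ball.1 hy
          calc dist y p ≤ dist y x + dist x p := dist_triangle _ _ _
          _ ≤ r := by linarith
        exact mem_K hp this
      exact hx.2 hint
    linarith
  · -- obtuseness
    intro q hq
    by_contra hpos
    push_neg at hpos
    have hqp : Complex.abs (q - p) ≠ 0 := by
      intro h0
      rw [show q - p = 0 by exact_mod_cast Complex.abs.eq_zero.1 h0] at hpos
      simp [dt] at hpos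
    have habs : 0 < Complex.abs (q - p) ^ 2 := by positivity
    set t : ℝ := min 1 (dt (x - p) (q - p) / Complex.abs (q - p) ^ 2) with ht
    have ht0 : 0 < t := lt_min one_pos (by positivity)
    have ht1 : t ≤ 1 := min_le_left _ _
    have htq : t * Complex.abs (q - p) ^ 2 ≤ dt (x - p) (q - p) := by
      calc t * Complex.abs (q - p) ^ 2
          ≤ (dt (x - p) (q - p) / Complex.abs (q - p) ^ 2) * Complex.abs (q - p) ^ 2 := by
            apply mul_le_mul_of_nonneg_right (min_le_right _ _) (le_of_lt habs)
      _ = dt (x - p) (q - p) := by field_simp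
    have hmem : p + (t : ℝ) • (q - p) ∈ segment ℝ a b := by
      have hcvx : Convex ℝ (segment ℝ a b) := convex_segment a b
      have := hcvx hp hq (by linarith : (0:ℝ) ≤ 1 - t) (le_of_lt ht0) (by ring)
      convert this using 1
      match_scalars <;> ring
    have hd2 : dist x p ^ 2 ≤ dist x (p + (t : ℝ) • (q - p)) ^ 2 := by
      have h1 : dist x p ≤ dist x (p + (t : ℝ) • (q - p)) := hmin hmem
      have h2 : (0:ℝ) ≤ dist x p := dist_nonneg
      nlinarith
    rw [Complex.dist_eq, Complex.dist_eq] at hd2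
    have hexp : Complex.abs (x - (p + (t:ℝ) • (q - p))) ^ 2
        = Complex.abs (x - p) ^ 2 - 2 * t * dt (x - p) (q - p)
          + t ^ 2 * Complex.abs (q - p) ^ 2 := by
      have : x - (p + (t:ℝ) • (q - p)) = (x - p) - (t:ℝ) • (q - p) := by
        match_scalars <;> ring
      rw [this, sq_abs_sub]
      have h1 : dt (x - p) ((t:ℝ) • (q - p)) = t * dt (x - p) (q - p) := by
        simp only [dt_eq, Complex.real_smul, Complex.mul_re, Complex.mul_im,
          Complex.ofReal_re, Complex.ofReal_im]
        ring
      have h2 : Complex.abs ((t:ℝ) • (q - p)) ^ 2 = t ^ 2 * Complex.abs (q - p) ^ 2 := by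
        rw [Complex.real_smul, map_mul, Complex.abs_ofReal, mul_pow, _root_.sq_abs]
      rw [h1, h2]
      ring
    rw [hexp] at hd2
    nlinarith


lemma dt_self (z : ℂ) : dt z z = Complex.abs z ^ 2 := by
  rw [dt_eq, Complex.sq_abs, Complex.normSq_apply]

lemma exit_of_dt {a b : ℂ} {r : ℝ} (hr : 0 < r) {x p y : ℂ} (hp : p ∈ segment ℝ a b)
    (hd : dist x p = r) (hobt : ∀ q ∈ segment ℝ a b, dt (x - p) (q - p) ≤ 0)
    (hy : 0 < dt (x - p) (y - x)) : y ∉ segment ℝ a b + Metric.closedBall (0 : ℂ) r := by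
  apply not_mem_K
  intro q hq
  have hsplit : dt (x - p) (y - q) = dt (x - p) (y - x) + dt (x - p) (x - p) - dt (x - p) (q - p) := by
    simp only [dt_eq, Complex.sub_re, Complex.sub_im]; ring
  have h1 : dt (x - p) (x - p) = r ^ 2 := by
    rw [dt_self, ← Complex.dist_eq, hd]
  have h2 : r ^ 2 < dt (x - p) (y - q) := by
    have := hobt q hq
    rw [hsplit, h1]; linarith
  have h3 : dt (x - p) (y - q) ≤ r * Complex.abs (y - q) := by
    have := dt_le (x - p) (y - q)
    rwa [← Complex.dist_eq, hd] at this
  rw [Complex.dist_eq]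
  nlinarith


lemma dt_smul_exp (s t φ α : ℝ) :
    dt ((s:ℂ) * Complex.exp (φ*Complex.I)) ((t:ℂ) * Complex.exp (α*Complex.I))
      = s * t * Real.cos (φ - α) := by
  simp only [dt_eq, Complex.mul_re, Complex.mul_im, Complex.ofReal_re, Complex.ofReal_im,
    Complex.exp_ofReal_mul_I_re, Complex.exp_ofReal_mul_I_im, Real.cos_sub]
  ring

lemma sq_abs_smul_exp_sub (s t φ α : ℝ) :
    Complex.abs ((s:ℂ) * Complex.exp (φ*Complex.I) - (t:ℂ) * Complex.exp (α*Complex.I)) ^ 2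
      = s^2 + t^2 - 2*s*t*Real.cos (φ - α) := by
  rw [sq_abs_sub, dt_smul_exp]
  simp only [map_mul, Complex.abs_ofReal, Complex.abs_exp_ofReal_mul_I, mul_one, mul_pow,
    _root_.sq_abs]
  ring

lemma data {a b c : ℂ} {r r₀ : ℝ} (hr : 0 < r) (hrr : r < r₀)
    (H : ∀ q ∈ segment ℝ a b, r₀ - r < dist q c)
    {x : ℂ} (hx1 : dist x c = r₀)
    (hx2 : x ∈ frontier (segment ℝ a b + Metric.closedBall (0:ℂ) r)) :
    ∃ p ∈ segment ℝ a b, ∃ θ α ρ : ℝ,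
      dist x p = r ∧ (∀ q ∈ segment ℝ a b, dt (x - p) (q - p) ≤ 0) ∧
      x = c + (r₀:ℂ) * Complex.exp (θ*Complex.I) ∧
      p = c + (ρ:ℂ) * Complex.exp (α*Complex.I) ∧
      r₀ - r < ρ ∧ ρ ≤ r₀ + r := by
  obtain ⟨p, hp, hd, hobt⟩ := frontier_K hr hx2
  refine ⟨p, hp, Complex.arg (x - c), Complex.arg (p - c), Complex.abs (p - c),
    hd, hobt, ?_, ?_, ?_, ?_⟩
  · have h1 : Complex.abs (x - c) = r₀ := by rw [← Complex.dist_eq]; exact hx1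
    have := Complex.abs_mul_exp_arg_mul_I (x - c)
    rw [h1] at this
    linear_combination -this
  · have := Complex.abs_mul_exp_arg_mul_I (p - c)
    linear_combination -this
  · have := H p hp
    rwa [Complex.dist_eq] at this
  · have h2 : Complex.abs (p - c) ≤ Complex.abs (p - x) + Complex.abs (x - c) := by
      have := Complex.abs.sub_le p x c
      simpa using this
    have h3 : Complex.abs (p - x) = r := by
      rw [AbsoluteValue.map_sub, ← Complex.dist_eq]; exact hd
    have h4 : Complex.abs (x - c) = r₀ := by rw [← Complex.dist_eq]; exact hx1
    rw [h3, h4] at h2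
    linarith

lemma exit_near {a b c : ℂ} {r r₀ : ℝ} (hr : 0 < r)
    {x p : ℂ} {θ α ρ : ℝ} (hp : p ∈ segment ℝ a b)
    (hd : dist x p = r) (hobt : ∀ q ∈ segment ℝ a b, dt (x - p) (q - p) ≤ 0)
    (hx : x = c + (r₀:ℂ) * Complex.exp (θ*Complex.I))
    (hpc : p = c + (ρ:ℂ) * Complex.exp (α*Complex.I))
    (hsin : Real.sin (α - θ) ≠ 0) (hρ : 0 < ρ) (hr₀ : 0 < r₀) :
    ∀ δ > 0, ∃ φ : ℝ, |φ - θ| < δ ∧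
      c + (r₀:ℂ) * Complex.exp (φ*Complex.I) ∉ segment ℝ a b + Metric.closedBall (0:ℂ) r := by
  intro δ hδ
  set β := Complex.arg (x - p) with hβ
  have habsxp : Complex.abs (x - p) = r := by rw [← Complex.dist_eq]; exact hd
  have hxp : x - p = (r:ℂ) * Complex.exp (β*Complex.I) := by
    have := Complex.abs_mul_exp_arg_mul_I (x - p)
    rw [habsxp] at this
    rw [← this]
  have hxp2 : x - p = (r₀:ℂ) * Complex.exp (θ*Complex.I) - (ρ:ℂ) * Complex.exp (α*Complex.I) := by
    rw [hx, hpc]; ring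
  have hre : r * Real.cos β = r₀ * Real.cos θ - ρ * Real.cos α := by
    have := congrArg Complex.re (hxp.symm.trans hxp2)
    simpa [Complex.mul_re, Complex.exp_ofReal_mul_I_re, Complex.exp_ofReal_mul_I_im] using this
  have him : r * Real.sin β = r₀ * Real.sin θ - ρ * Real.sin α := by
    have := congrArg Complex.im (hxp.symm.trans hxp2)
    simpa [Complex.mul_im, Complex.exp_ofReal_mul_I_re, Complex.exp_ofReal_mul_I_im] using this
  have hkey : r * Real.sin (β - θ) = ρ * Real.sin (θ - α) := by
    rw [Real.sin_sub, Real.sin_sub]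
    linear_combination Real.cos θ * him - Real.sin θ * hre
  have hσ : Real.sin (β - θ) ≠ 0 := by
    intro h0
    rw [h0, mul_zero] at hkey
    have : Real.sin (θ - α) = 0 := by
      replace hkey := mul_eq_zero.1 hkey.symm
      rcases hkey with h | h
      · exact absurd h (ne_of_gt hρ)
      · exact h
    exact hsin (by rw [show α - θ = -(θ - α) by ring, Real.sin_neg, this, neg_zero])
  by_contra hcon
  push_neg at hcon
  have hloc : IsLocalMax (fun φ => Real.cos (β - φ)) θ := by
    apply Metric.eventually_nhds_iff.2 ⟨δ, hδ, ?_⟩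
    intro φ hφ
    rw [Real.dist_eq] at hφ
    have hyK := hcon φ hφ
    by_contra hgt
    push_neg at hgt
    have hdt : 0 < dt (x - p) ((c + (r₀:ℂ) * Complex.exp (φ*Complex.I)) - x) := by
      have hyx : (c + (r₀:ℂ) * Complex.exp (φ*Complex.I)) - x
          = (r₀:ℂ) * Complex.exp (φ*Complex.I) - (r₀:ℂ) * Complex.exp (θ*Complex.I) := by
        rw [hx]; ring
      rw [hyx, hxp]
      have e1 : dt ((r:ℂ) * Complex.exp (β*Complex.I))
          ((r₀:ℂ) * Complex.exp (φ*Complex.I) - (r₀:ℂ) * Complex.exp (θ*Complex.I))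
          = r * r₀ * Real.cos (β - φ) - r * r₀ * Real.cos (β - θ) := by
        simp only [dt_eq, Complex.sub_re, Complex.sub_im, Complex.mul_re, Complex.mul_im,
          Complex.ofReal_re, Complex.ofReal_im, Complex.exp_ofReal_mul_I_re,
          Complex.exp_ofReal_mul_I_im, Real.cos_sub]
        ring
      rw [e1]
      nlinarith [mul_pos (mul_pos hr hr₀) (sub_pos.2 hgt)]
    exact (exit_of_dt hr hp hd hobt hdt) hyK
  have hder : HasDerivAt (fun φ => Real.cos (β - φ)) (Real.sin (β - θ)) θ := by
    have h1 : HasDerivAt (fun φ : ℝ => β - φ) (-1) θ := (hasDerivAt_id θ).const_sub β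
    have h2 := (Real.hasDerivAt_cos (β - θ)).comp θ h1
    refine h2.congr_deriv ?_
    ring
  exact hσ (hloc.hasDerivAt_eq_zero hder)


noncomputable def psi (e w : ℂ) : ℝ := Complex.arg (-(w * (starRingEnd ℂ) e))

lemma abs_neg_mul_conj {w e : ℂ} (hw : Complex.abs w = 1) (he : Complex.abs e = 1) :
    Complex.abs (-(w * (starRingEnd ℂ) e)) = 1 := by
  rw [map_neg_eq_map, map_mul, Complex.abs_conj, hw, he, one_mul]

lemma conj_mul_self_eq_one {e : ℂ} (he : Complex.abs e = 1) : (starRingEnd ℂ) e * e = 1 := by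
  rw [mul_comm, Complex.mul_conj, Complex.normSq_eq_abs, he]
  norm_num

lemma neg_mul_conj_ne_neg_one {w e : ℂ} (he : Complex.abs e = 1) (hne : w ≠ e) :
    -(w * (starRingEnd ℂ) e) ≠ -1 := by
  intro h
  apply hne
  have h1 : w * (starRingEnd ℂ) e = 1 := by linear_combination -h
  calc w = w * ((starRingEnd ℂ) e * e) := by rw [conj_mul_self_eq_one he, mul_one]
  _ = (w * (starRingEnd ℂ) e) * e := by ring
  _ = e := by rw [h1, one_mul]

lemma mem_slitPlane_of_unit {ζ : ℂ} (h1 : Complex.abs ζ = 1) (h2 : ζ ≠ -1) :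
    ζ ∈ Complex.slitPlane := by
  rw [Complex.mem_slitPlane_iff]
  by_contra h
  push_neg at h
  obtain ⟨hre, him⟩ := h
  have hsq : ζ.re ^ 2 + ζ.im ^ 2 = 1 := by
    have := Complex.sq_abs ζ
    rw [h1, Complex.normSq_apply] at this
    nlinarith
  rw [him] at hsq
  have : ζ.re = -1 := by nlinarith
  exact h2 (Complex.ext (by simp [this]) (by simp [him]))

lemma psi_continuousAt {e w : ℂ} (hw : Complex.abs w = 1) (he : Complex.abs e = 1)
    (hne : w ≠ e) : ContinuousAt (psi e) w := by
  have h1 : ContinuousAt Complex.arg (-(w * (starRingEnd ℂ) e)) :=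
    Complex.continuousAt_arg (mem_slitPlane_of_unit (abs_neg_mul_conj hw he)
      (neg_mul_conj_ne_neg_one he hne))
  have h2 : Continuous (fun w : ℂ => -(w * (starRingEnd ℂ) e)) := by fun_prop
  have h3 : ContinuousAt (fun w : ℂ => Complex.arg (-(w * (starRingEnd ℂ) e))) w :=
    Filter.Tendsto.comp h1 h2.continuousAt
  exact h3

lemma psi_inj {e w₁ w₂ : ℂ} (h1 : Complex.abs w₁ = 1) (h2 : Complex.abs w₂ = 1)
    (he : Complex.abs e = 1) (heq : psi e w₁ = psi e w₂) : w₁ = w₂ := by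
  have h3 : -(w₁ * (starRingEnd ℂ) e) = -(w₂ * (starRingEnd ℂ) e) :=
    Complex.ext_abs_arg ((abs_neg_mul_conj h1 he).trans (abs_neg_mul_conj h2 he).symm) heq
  have h4 : w₁ * (starRingEnd ℂ) e = w₂ * (starRingEnd ℂ) e := by linear_combination -h3
  calc w₁ = w₁ * ((starRingEnd ℂ) e * e) := by rw [conj_mul_self_eq_one he, mul_one]
  _ = (w₁ * (starRingEnd ℂ) e) * e := by ring
  _ = (w₂ * (starRingEnd ℂ) e) * e := by rw [h4]
  _ = w₂ * ((starRingEnd ℂ) e * e) := by ring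
  _ = w₂ := by rw [conj_mul_self_eq_one he, mul_one]

lemma arc_mem {a b c : ℂ} {r r₀ : ℝ} (hr : 0 < r) (hr₀ : 0 ≤ r₀)
    {x p : ℂ} {θ α ρ : ℝ} (hp : p ∈ segment ℝ a b) (hd : dist x p = r)
    (hx : x = c + (r₀:ℂ) * Complex.exp (θ*Complex.I))
    (hpc : p = c + (ρ:ℂ) * Complex.exp (α*Complex.I)) (hρ0 : 0 ≤ ρ)
    {φ : ℝ} (hcos : Real.cos (θ - α) ≤ Real.cos (φ - α)) :
    c + (r₀:ℂ) * Complex.exp (φ*Complex.I) ∈ segment ℝ a b + Metric.closedBall (0:ℂ) r := by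
  apply mem_K hp
  have h1 : dist (c + (r₀:ℂ) * Complex.exp (φ*Complex.I)) p ^ 2
      = r₀^2 + ρ^2 - 2*r₀*ρ*Real.cos (φ - α) := by
    rw [Complex.dist_eq, hpc, show c + (r₀:ℂ) * Complex.exp (φ*Complex.I)
      - (c + (ρ:ℂ) * Complex.exp (α*Complex.I))
      = (r₀:ℂ) * Complex.exp (φ*Complex.I) - (ρ:ℂ) * Complex.exp (α*Complex.I) by ring,
      sq_abs_smul_exp_sub]
  have h2 : r ^ 2 = r₀^2 + ρ^2 - 2*r₀*ρ*Real.cos (θ - α) := by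
    rw [← hd, Complex.dist_eq, hx, hpc, show c + (r₀:ℂ) * Complex.exp (θ*Complex.I)
      - (c + (ρ:ℂ) * Complex.exp (α*Complex.I))
      = (r₀:ℂ) * Complex.exp (θ*Complex.I) - (ρ:ℂ) * Complex.exp (α*Complex.I) by ring,
      sq_abs_smul_exp_sub]
  have h3 : dist (c + (r₀:ℂ) * Complex.exp (φ*Complex.I)) p ^ 2 ≤ r ^ 2 := by
    rw [h1, h2]
    nlinarith [mul_nonneg hr₀ hρ0]
  nlinarith [dist_nonneg (x := c + (r₀:ℂ) * Complex.exp (φ*Complex.I)) (y := p)]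

lemma radial_mem {a b c : ℂ} {r r₀ : ℝ} (hr : 0 < r) (hr₀ : 0 < r₀)
    {z : ℂ} (hz : z ∈ segment ℝ a b) (hz1 : r₀ - r ≤ Complex.abs (z - c))
    (hz2 : Complex.abs (z - c) ≤ r₀ + r) (hz0 : z ≠ c) :
    c + (r₀:ℂ) * ((z - c) / (Complex.abs (z - c) : ℝ))
      ∈ segment ℝ a b + Metric.closedBall (0:ℂ) r := by
  apply mem_K hz
  set R : ℝ := Complex.abs (z - c) with hR
  have hR0 : 0 < R := by
    rw [hR]
    simpa using sub_ne_zero.2 hz0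
  have hRC : (R:ℂ) ≠ 0 := by exact_mod_cast ne_of_gt hR0
  have hyz : c + (r₀:ℂ) * ((z - c) / (R:ℝ)) - z = (((r₀ - R)/R : ℝ) : ℂ) * (z - c) := by
    push_cast
    field_simp
    ring
  rw [Complex.dist_eq, hyz, map_mul, Complex.abs_ofReal, ← hR, abs_div, abs_of_pos hR0,
    div_mul_cancel₀ _ (ne_of_gt hR0), abs_le]
  constructor <;> linarith


lemma abs_mono_uIcc {φ θ A : ℝ} (h : φ ∈ Set.uIcc θ A) : |φ - A| ≤ |θ - A| := by
  rw [Set.mem_uIcc] at h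
  rcases h with ⟨h1, h2⟩ | ⟨h1, h2⟩
  · rw [abs_of_nonpos (show φ - A ≤ 0 by linarith), abs_of_nonpos (show θ - A ≤ 0 by linarith)]
    linarith
  · rw [_root_.abs_of_nonneg (show (0:ℝ) ≤ φ - A by linarith),
      _root_.abs_of_nonneg (show (0:ℝ) ≤ θ - A by linarith)]; linarith

lemma rep (θ α : ℝ) : ∃ A : ℝ, |θ - A| ≤ Real.pi ∧
    Complex.exp (A*Complex.I) = Complex.exp (α*Complex.I) ∧
    ∀ x : ℝ, Real.cos (x - α) = Real.cos (x - A) := by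
  have h2π : (0:ℝ) < 2 * Real.pi := Real.two_pi_pos
  set A := toIocMod h2π (θ - Real.pi) α with hA
  set k : ℤ := toIocDiv h2π (θ - Real.pi) α with hk
  have hmem := toIocMod_mem_Ioc h2π (θ - Real.pi) α
  have hsum : A + k • (2 * Real.pi) = α := toIocMod_add_toIocDiv_zsmul h2π (θ - Real.pi) α
  rw [zsmul_eq_mul] at hsum
  obtain ⟨hm1, hm2⟩ := hmem
  refine ⟨A, by rw [abs_le]; constructor <;> linarith, ?_, ?_⟩
  · rw [show (α:ℝ) = A + (k:ℝ) * (2*Real.pi) by linarith]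
    push_cast
    rw [add_mul, Complex.exp_add,
      show ((k:ℂ) * (2 * (Real.pi:ℂ)) * Complex.I) = (k:ℂ) * (2 * (Real.pi:ℂ) * Complex.I) by ring,
      Complex.exp_int_mul_two_pi_mul_I, mul_one]
  · intro x
    rw [show x - α = (x - A) + (-k:ℤ) * (2*Real.pi) by push_cast; linarith [hsum]]
    rw [Real.cos_add_int_mul_two_pi]

lemma unit_abs {w : ℂ} (hw : w ≠ 0) : Complex.abs (w / (Complex.abs w : ℝ)) = 1 := by
  rw [map_div₀, Complex.abs_ofReal, abs_of_pos (by simpa using hw), div_self (by simpa using hw)]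


lemma psi_comp_continuousAt {e : ℂ} {f : ℝ → ℂ} {φ : ℝ} (hf : ContinuousAt f φ)
    (he : Complex.abs e = 1) (hw : Complex.abs (f φ) = 1) (hne : f φ ≠ e) :
    ContinuousAt (fun t => psi e (f t)) φ := by
  have h1 : ContinuousAt Complex.arg (-(f φ * (starRingEnd ℂ) e)) :=
    Complex.continuousAt_arg (mem_slitPlane_of_unit (abs_neg_mul_conj hw he)
      (neg_mul_conj_ne_neg_one he hne))
  have h2 : ContinuousAt (fun t => -(f t * (starRingEnd ℂ) e)) φ :=
    (hf.mul continuousAt_const).neg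
  exact Filter.Tendsto.comp h1 h2

lemma psi_comp_continuousWithinAt {e : ℂ} {f : ℝ → ℂ} {s : Set ℝ} {φ : ℝ}
    (hf : ContinuousWithinAt f s φ)
    (he : Complex.abs e = 1) (hw : Complex.abs (f φ) = 1) (hne : f φ ≠ e) :
    ContinuousWithinAt (fun t => psi e (f t)) s φ := by
  have h1 : ContinuousAt Complex.arg (-(f φ * (starRingEnd ℂ) e)) :=
    Complex.continuousAt_arg (mem_slitPlane_of_unit (abs_neg_mul_conj hw he)
      (neg_mul_conj_ne_neg_one he hne))
  have h2 : ContinuousWithinAt (fun t => -(f t * (starRingEnd ℂ) e)) s φ :=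
    (hf.mul continuousWithinAt_const).neg
  exact Filter.Tendsto.comp h1 h2

lemma contE : Continuous (fun φ : ℝ => Complex.exp (φ * Complex.I)) :=
  Complex.continuous_exp.comp (Complex.continuous_ofReal.mul continuous_const)

lemma ivt_arc {a b c : ℂ} {r r₀ : ℝ} (hr : 0 < r) (hr₀ : 0 < r₀)
    {e x p : ℂ} {θ α ρ : ℝ} (he : Complex.abs e = 1)
    (heK : c + (r₀:ℂ) * e ∉ segment ℝ a b + Metric.closedBall (0:ℂ) r)
    (hp : p ∈ segment ℝ a b) (hd : dist x p = r)
    (hx : x = c + (r₀:ℂ) * Complex.exp (θ*Complex.I))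
    (hpc : p = c + (ρ:ℂ) * Complex.exp (α*Complex.I)) (hρ0 : 0 ≤ ρ)
    {t : ℝ}
    (ht : t ∈ Set.uIcc (psi e (Complex.exp (θ*Complex.I))) (psi e (Complex.exp (α*Complex.I)))) :
    ∃ w : ℂ, Complex.abs w = 1 ∧ psi e w = t ∧
      c + (r₀:ℂ) * w ∈ segment ℝ a b + Metric.closedBall (0:ℂ) r := by
  obtain ⟨A, hA, hEA, hcosA⟩ := rep θ α
  have hmemb : ∀ φ ∈ Set.uIcc θ A,
      c + (r₀:ℂ) * Complex.exp (φ*Complex.I) ∈ segment ℝ a b + Metric.closedBall (0:ℂ) r := by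
    intro φ hφ
    apply arc_mem hr hr₀.le hp hd hx hpc hρ0
    rw [hcosA θ, hcosA φ, ← Real.cos_abs (θ - A), ← Real.cos_abs (φ - A)]
    exact Real.cos_le_cos_of_nonneg_of_le_pi (abs_nonneg _) hA (abs_mono_uIcc hφ)
  have hcont : ContinuousOn (fun φ : ℝ => psi e (Complex.exp (φ*Complex.I))) (Set.uIcc θ A) := by
    intro φ hφ
    have hne : Complex.exp (φ*Complex.I) ≠ e := by
      intro hEq
      exact heK (hEq ▸ hmemb φ hφ)
    exact (psi_comp_continuousAt contE.continuousAt he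
      (Complex.abs_exp_ofReal_mul_I φ) hne).continuousWithinAt
  have hIVT := intermediate_value_uIcc hcont
  have ht' : t ∈ Set.uIcc (psi e (Complex.exp (θ*Complex.I))) (psi e (Complex.exp (A*Complex.I))) := by
    rwa [hEA]
  obtain ⟨φ, hφmem, hφeq⟩ := hIVT ht'
  exact ⟨Complex.exp (φ*Complex.I), Complex.abs_exp_ofReal_mul_I φ, hφeq, hmemb φ hφmem⟩

lemma ivt_radial {a b c : ℂ} {r r₀ : ℝ} (hr : 0 < r) (hrr : r < r₀)
    (H : ∀ q ∈ segment ℝ a b, r₀ - r < dist q c)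
    {e p₁ p₃ : ℂ} {α₁ α₃ ρ₁ ρ₃ : ℝ} (he : Complex.abs e = 1)
    (heK : c + (r₀:ℂ) * e ∉ segment ℝ a b + Metric.closedBall (0:ℂ) r)
    (hp₁ : p₁ ∈ segment ℝ a b) (hp₃ : p₃ ∈ segment ℝ a b)
    (hpc₁ : p₁ = c + (ρ₁:ℂ) * Complex.exp (α₁*Complex.I))
    (hpc₃ : p₃ = c + (ρ₃:ℂ) * Complex.exp (α₃*Complex.I))
    (hρ₁ : 0 < ρ₁) (hρ₃ : 0 < ρ₃) (hρ₁' : ρ₁ ≤ r₀ + r) (hρ₃' : ρ₃ ≤ r₀ + r)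
    {t : ℝ}
    (ht : t ∈ Set.uIcc (psi e (Complex.exp (α₁*Complex.I))) (psi e (Complex.exp (α₃*Complex.I)))) :
    ∃ w : ℂ, Complex.abs w = 1 ∧ psi e w = t ∧
      c + (r₀:ℂ) * w ∈ segment ℝ a b + Metric.closedBall (0:ℂ) r := by
  have hr₀ : 0 < r₀ := hr.trans hrr
  set z : ℝ → ℂ := fun s => (1 - s) • p₁ + s • p₃ with hz
  have hzseg : ∀ s ∈ Set.uIcc (0:ℝ) 1, z s ∈ segment ℝ a b := by
    intro s hs
    rw [Set.uIcc_of_le (by norm_num : (0:ℝ) ≤ 1)] at hs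
    have : z s ∈ segment ℝ p₁ p₃ := ⟨1 - s, s, by linarith [hs.1, hs.2], hs.1, by ring, rfl⟩
    exact (convex_segment a b).segment_subset hp₁ hp₃ this
  have hzlb : ∀ s ∈ Set.uIcc (0:ℝ) 1, r₀ - r < Complex.abs (z s - c) := by
    intro s hs
    have := H (z s) (hzseg s hs)
    rwa [Complex.dist_eq] at this
  have hzne : ∀ s ∈ Set.uIcc (0:ℝ) 1, z s ≠ c := by
    intro s hs h0
    have := hzlb s hs
    rw [h0] at this
    simp at this
    linarith
  have h1 : Complex.abs (p₁ - c) = ρ₁ := by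
    rw [hpc₁, show c + (ρ₁:ℂ) * Complex.exp (α₁*Complex.I) - c
      = (ρ₁:ℂ) * Complex.exp (α₁*Complex.I) by ring, map_mul, Complex.abs_ofReal,
      Complex.abs_exp_ofReal_mul_I, mul_one, _root_.abs_of_nonneg hρ₁.le]
  have h3 : Complex.abs (p₃ - c) = ρ₃ := by
    rw [hpc₃, show c + (ρ₃:ℂ) * Complex.exp (α₃*Complex.I) - c
      = (ρ₃:ℂ) * Complex.exp (α₃*Complex.I) by ring, map_mul, Complex.abs_ofReal,
      Complex.abs_exp_ofReal_mul_I, mul_one, _root_.abs_of_nonneg hρ₃.le]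
  have hzub : ∀ s ∈ Set.uIcc (0:ℝ) 1, Complex.abs (z s - c) ≤ r₀ + r := by
    intro s hs
    rw [Set.uIcc_of_le (by norm_num : (0:ℝ) ≤ 1)] at hs
    have hzc : z s - c = (1 - s) • (p₁ - c) + s • (p₃ - c) := by
      rw [hz]
      simp only
      match_scalars <;> ring
    calc Complex.abs (z s - c) ≤ ‖(1 - s) • (p₁ - c)‖ + ‖s • (p₃ - c)‖ := by
          rw [hzc, ← Complex.norm_eq_abs]; exact norm_add_le _ _
    _ = |1 - s| * ρ₁ + |s| * ρ₃ := by
          rw [norm_smul, norm_smul, Real.norm_eq_abs, Real.norm_eq_abs,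
            Complex.norm_eq_abs, Complex.norm_eq_abs, h1, h3]
    _ = (1 - s) * ρ₁ + s * ρ₃ := by
          rw [_root_.abs_of_nonneg (by linarith [hs.2] : (0:ℝ) ≤ 1 - s),
            _root_.abs_of_nonneg hs.1]
    _ ≤ r₀ + r := by nlinarith [hs.1, hs.2]
  set g : ℝ → ℂ := fun s => (z s - c) / ((Complex.abs (z s - c) : ℝ) : ℂ) with hg
  have hgunit : ∀ s ∈ Set.uIcc (0:ℝ) 1, Complex.abs (g s) = 1 := by
    intro s hs
    exact unit_abs (sub_ne_zero.2 (hzne s hs))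
  have hmemb : ∀ s ∈ Set.uIcc (0:ℝ) 1,
      c + (r₀:ℂ) * g s ∈ segment ℝ a b + Metric.closedBall (0:ℂ) r := by
    intro s hs
    exact radial_mem hr hr₀ (hzseg s hs) (hzlb s hs).le (hzub s hs) (hzne s hs)
  have hcont : ContinuousOn (fun s => psi e (g s)) (Set.uIcc (0:ℝ) 1) := by
    have hzcont : Continuous z := by
      apply Continuous.add
      · exact (continuous_const.sub continuous_id).smul continuous_const
      · exact continuous_id.smul continuous_const
    have hgcont : ContinuousOn g (Set.uIcc (0:ℝ) 1) := by
      apply ContinuousOn.div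
      · exact (hzcont.sub continuous_const).continuousOn
      · exact (Complex.continuous_ofReal.comp
          (Complex.continuous_abs.comp (hzcont.sub continuous_const))).continuousOn
      · intro s hs
        exact Complex.ofReal_ne_zero.2
          (Complex.abs.ne_zero (sub_ne_zero.2 (hzne s hs)))
    intro s hs
    have hne : g s ≠ e := by
      intro hEq
      exact heK (hEq ▸ hmemb s hs)
    exact psi_comp_continuousWithinAt (hgcont s hs) he (hgunit s hs) hne
  have hz0 : z 0 = p₁ := by rw [hz]; simp
  have hz1 : z 1 = p₃ := by rw [hz]; simp
  have hg0 : g 0 = Complex.exp (α₁*Complex.I) := by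
    rw [hg]
    simp only
    rw [hz0, h1, hpc₁,
      show c + (ρ₁:ℂ) * Complex.exp (α₁*Complex.I) - c = (ρ₁:ℂ) * Complex.exp (α₁*Complex.I) by ring]
    exact mul_div_cancel_left₀ _ (by exact_mod_cast hρ₁.ne')
  have hg1 : g 1 = Complex.exp (α₃*Complex.I) := by
    rw [hg]
    simp only
    rw [hz1, h3, hpc₃,
      show c + (ρ₃:ℂ) * Complex.exp (α₃*Complex.I) - c = (ρ₃:ℂ) * Complex.exp (α₃*Complex.I) by ring]
    exact mul_div_cancel_left₀ _ (by exact_mod_cast hρ₃.ne')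
  have ht' : t ∈ Set.uIcc (psi e (g 0)) (psi e (g 1)) := by rw [hg0, hg1]; exact ht
  obtain ⟨s, hsmem, hseq⟩ := intermediate_value_uIcc hcont ht'
  exact ⟨g s, hgunit s hsmem, hseq, hmemb s hsmem⟩


lemma final {a b c : ℂ} {r r₀ : ℝ} (hr : 0 < r) (hrr : r < r₀)
    (H : ∀ q ∈ segment ℝ a b, r₀ - r < dist q c)
    {e : ℂ} (he : Complex.abs e = 1)
    (heK : c + (r₀:ℂ) * e ∉ segment ℝ a b + Metric.closedBall (0:ℂ) r)
    {x₁ x₂ x₃ p₁ p₂ p₃ : ℂ} {θ₁ θ₂ θ₃ α₁ α₂ α₃ ρ₁ ρ₂ ρ₃ : ℝ}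
    (hp₁ : p₁ ∈ segment ℝ a b) (hp₂ : p₂ ∈ segment ℝ a b) (hp₃ : p₃ ∈ segment ℝ a b)
    (hd₁ : dist x₁ p₁ = r) (hd₂ : dist x₂ p₂ = r) (hd₃ : dist x₃ p₃ = r)
    (hobt₂ : ∀ q ∈ segment ℝ a b, dt (x₂ - p₂) (q - p₂) ≤ 0)
    (hx₁ : x₁ = c + (r₀:ℂ) * Complex.exp (θ₁*Complex.I))
    (hx₂ : x₂ = c + (r₀:ℂ) * Complex.exp (θ₂*Complex.I))
    (hx₃ : x₃ = c + (r₀:ℂ) * Complex.exp (θ₃*Complex.I))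
    (hpc₁ : p₁ = c + (ρ₁:ℂ) * Complex.exp (α₁*Complex.I))
    (hpc₂ : p₂ = c + (ρ₂:ℂ) * Complex.exp (α₂*Complex.I))
    (hpc₃ : p₃ = c + (ρ₃:ℂ) * Complex.exp (α₃*Complex.I))
    (hρ₁ : 0 < ρ₁) (hρ₂ : 0 < ρ₂) (hρ₃ : 0 < ρ₃)
    (hρ₁' : ρ₁ ≤ r₀ + r) (hρ₃' : ρ₃ ≤ r₀ + r)
    (hsin₂ : Real.sin (α₂ - θ₂) ≠ 0)
    (hord₁ : psi e (Complex.exp (θ₁*Complex.I)) < psi e (Complex.exp (θ₂*Complex.I)))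
    (hord₂ : psi e (Complex.exp (θ₂*Complex.I)) < psi e (Complex.exp (θ₃*Complex.I))) :
    False := by
  have hr₀ : 0 < r₀ := hr.trans hrr
  set ψ₁ := psi e (Complex.exp (θ₁*Complex.I)) with hψ₁
  set ψ₂ := psi e (Complex.exp (θ₂*Complex.I)) with hψ₂
  set ψ₃ := psi e (Complex.exp (θ₃*Complex.I)) with hψ₃
  -- x₂ is in K, so exp(θ₂ I) ≠ e
  have hx₂K : x₂ ∈ segment ℝ a b + Metric.closedBall (0:ℂ) r := mem_K hp₂ (le_of_eq hd₂)
  have hne₂ : Complex.exp (θ₂*Complex.I) ≠ e := by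
    intro hEq
    apply heK
    rw [← hEq, ← hx₂]
    exact hx₂K
  -- continuity of ψ ∘ exp at θ₂
  have hψcont : ContinuousAt (fun φ : ℝ => psi e (Complex.exp (φ*Complex.I))) θ₂ :=
    psi_comp_continuousAt contE.continuousAt he (Complex.abs_exp_ofReal_mul_I θ₂) hne₂
  set ε : ℝ := min (ψ₂ - ψ₁) (ψ₃ - ψ₂) with hε
  have hε0 : 0 < ε := lt_min (by linarith) (by linarith)
  obtain ⟨δ, hδ0, hδ⟩ := Metric.continuousAt_iff.1 hψcont ε hε0
  -- get exit point
  obtain ⟨φe, hφe, hout⟩ := exit_near hr hp₂ hd₂ hobt₂ hx₂ hpc₂ hsin₂ hρ₂ hr₀ δ hδ0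
  have hψe : |psi e (Complex.exp (φe*Complex.I)) - ψ₂| < ε := by
    have := hδ (show dist φe θ₂ < δ by rwa [Real.dist_eq])
    rwa [Real.dist_eq] at this
  have hlow : ψ₁ < psi e (Complex.exp (φe*Complex.I)) := by
    have := abs_lt.1 hψe
    have h2 : ε ≤ ψ₂ - ψ₁ := min_le_left _ _
    linarith [this.1]
  have hhigh : psi e (Complex.exp (φe*Complex.I)) < ψ₃ := by
    have := abs_lt.1 hψe
    have h2 : ε ≤ ψ₃ - ψ₂ := min_le_right _ _
    linarith [this.2]
  set τ := psi e (Complex.exp (φe*Complex.I)) with hτ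
  set m₁ := psi e (Complex.exp (α₁*Complex.I)) with hm₁
  set m₃ := psi e (Complex.exp (α₃*Complex.I)) with hm₃
  have hτmem : τ ∈ Set.uIcc ψ₁ ψ₃ := Set.mem_uIcc.2 (Or.inl ⟨hlow.le, hhigh.le⟩)
  have hsub : Set.uIcc ψ₁ ψ₃ ⊆ Set.uIcc ψ₁ m₁ ∪ (Set.uIcc m₁ m₃ ∪ Set.uIcc m₃ ψ₃) := by
    refine (Set.uIcc_subset_uIcc_union_uIcc (b := m₁)).trans ?_
    exact Set.union_subset_union_right _ (Set.uIcc_subset_uIcc_union_uIcc (b := m₃))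
  have hw : ∃ w : ℂ, Complex.abs w = 1 ∧ psi e w = τ ∧
      c + (r₀:ℂ) * w ∈ segment ℝ a b + Metric.closedBall (0:ℂ) r := by
    rcases hsub hτmem with h | h | h
    · exact ivt_arc hr hr₀ he heK hp₁ hd₁ hx₁ hpc₁ hρ₁.le h
    · exact ivt_radial hr hrr H he heK hp₁ hp₃ hpc₁ hpc₃ hρ₁ hρ₃ hρ₁' hρ₃' h
    · have h' : τ ∈ Set.uIcc (psi e (Complex.exp (θ₃*Complex.I)))
          (psi e (Complex.exp (α₃*Complex.I))) := by
        rw [Set.uIcc_comm]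
        exact h
      exact ivt_arc hr hr₀ he heK hp₃ hd₃ hx₃ hpc₃ hρ₃.le h'
  obtain ⟨w, hwu, hwψ, hwK⟩ := hw
  have hwe : w = Complex.exp (φe*Complex.I) :=
    psi_inj hwu (Complex.abs_exp_ofReal_mul_I φe) he hwψ
  rw [hwe] at hwK
  exact hout hwK


lemma caseA {a b c : ℂ} {r r₀ : ℝ} (hr : 0 < r) (hrr : r < r₀)
    {x p : ℂ} (hp : p ∈ segment ℝ a b) (hd : dist x p = r)
    (hobt : ∀ q ∈ segment ℝ a b, dt (x - p) (q - p) ≤ 0)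
    (hxc : dist x c = r₀)
    (hcol : ((r₀:ℂ) + (r:ℂ)) * (x - c) = (r₀:ℂ) * (p - c))
    {y : ℂ} (hy : dist y c = r₀) (hyx : y ≠ x) :
    y ∉ segment ℝ a b + Metric.closedBall (0:ℂ) r := by
  have hr₀ : 0 < r₀ := hr.trans hrr
  have habsx : Complex.abs (x - c) = r₀ := by rw [← Complex.dist_eq]; exact hxc
  have habsy : Complex.abs (y - c) = r₀ := by rw [← Complex.dist_eq]; exact hy
  have hxp' : (r₀:ℂ) * (x - p) = -(r:ℂ) * (x - c) := by linear_combination hcol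
  have hre : r₀ * (x - p).re = -(r * (x - c).re) := by
    have := congrArg Complex.re hxp'
    simpa [Complex.mul_re, Complex.ofReal_re, Complex.ofReal_im] using this
  have him : r₀ * (x - p).im = -(r * (x - c).im) := by
    have := congrArg Complex.im hxp'
    simpa [Complex.mul_im, Complex.ofReal_re, Complex.ofReal_im] using this
  have hre2 : (r₀ + r) * (x - c).re = r₀ * (p - c).re := by
    have := congrArg Complex.re hcol
    simpa [Complex.add_re, Complex.mul_re, Complex.ofReal_re, Complex.ofReal_im] using this
  have him2 : (r₀ + r) * (x - c).im = r₀ * (p - c).im := by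
    have := congrArg Complex.im hcol
    simpa [Complex.add_im, Complex.mul_im, Complex.ofReal_re, Complex.ofReal_im] using this
  have hxx : dt (x - c) (x - c) = r₀ ^ 2 := by rw [dt_self, habsx]
  have hdtpc : r₀ * dt (x - c) (p - c) = (r₀ + r) * r₀ ^ 2 := by
    rw [← hxx]
    simp only [dt_eq]
    linear_combination (-(x - c).re) * hre2 + (-(x - c).im) * him2
  apply not_mem_K
  intro q hq
  have hdtq : 0 ≤ dt (x - c) (q - p) := by
    have h1 := hobt q hq
    have h2 : r₀ * dt (x - p) (q - p) = -(r * dt (x - c) (q - p)) := by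
      simp only [dt_eq]
      linear_combination (q - p).re * hre + (q - p).im * him
    nlinarith
  have hdty : dt (x - c) (y - c) < r₀ ^ 2 := by
    have h1 : Complex.abs ((x - c) - (y - c)) ^ 2
        = r₀^2 - 2 * dt (x - c) (y - c) + r₀^2 := by
      rw [sq_abs_sub, habsx, habsy]
    have h2 : 0 < Complex.abs ((x - c) - (y - c)) ^ 2 := by
      have hne : (x - c) - (y - c) ≠ 0 := fun h0 => hyx (by
        have : x = y := by linear_combination h0
        exact this.symm)
      exact pow_pos (Complex.abs.pos hne) 2
    nlinarith
  have hsplit : dt (x - c) (q - y)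
      = dt (x - c) (q - p) + dt (x - c) (p - c) - dt (x - c) (y - c) := by
    simp only [dt_eq, Complex.sub_re, Complex.sub_im]
    ring
  have hgt : r₀ * r < dt (x - c) (q - y) := by
    rw [hsplit]
    nlinarith
  have hle : dt (x - c) (q - y) ≤ r₀ * Complex.abs (q - y) := by
    have := dt_le (x - c) (q - y)
    rwa [habsx] at this
  have : r < Complex.abs (q - y) := by nlinarith
  rw [Complex.dist_eq, AbsoluteValue.map_sub]
  linarith

lemma collinear_of_sin_eq_zero {c x p : ℂ} {r r₀ θ α ρ : ℝ} (hr : 0 < r) (hrr : r < r₀)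
    (hd : dist x p = r) (hx : x = c + (r₀:ℂ) * Complex.exp (θ*Complex.I))
    (hpc : p = c + (ρ:ℂ) * Complex.exp (α*Complex.I)) (hρ : r₀ - r < ρ)
    (hsin : Real.sin (α - θ) = 0) :
    ((r₀:ℂ) + (r:ℂ)) * (x - c) = (r₀:ℂ) * (p - c) := by
  have hρ0 : 0 < ρ := by linarith
  have hr2 : r ^ 2 = r₀^2 + ρ^2 - 2*r₀*ρ*Real.cos (θ - α) := by
    rw [← hd, Complex.dist_eq, hx, hpc, show c + (r₀:ℂ) * Complex.exp (θ*Complex.I)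
      - (c + (ρ:ℂ) * Complex.exp (α*Complex.I))
      = (r₀:ℂ) * Complex.exp (θ*Complex.I) - (ρ:ℂ) * Complex.exp (α*Complex.I) by ring,
      sq_abs_smul_exp_sub]
  have hcosθα : Real.cos (θ - α) = Real.cos (α - θ) := by
    rw [show θ - α = -(α - θ) by ring, Real.cos_neg]
  have hfac : (Real.cos (α - θ) - 1) * (Real.cos (α - θ) + 1) = 0 := by
    nlinarith [Real.sin_sq_add_cos_sq (α - θ)]
  rcases mul_eq_zero.1 hfac with hc | hc
  · have hcos : Real.cos (α - θ) = 1 := by linarith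
    rw [hcosθα, hcos] at hr2
    have hfac2 : (ρ - r₀ - r) * (ρ - r₀ + r) = 0 := by nlinarith
    have hρeq : ρ = r₀ + r := by
      rcases mul_eq_zero.1 hfac2 with h | h
      · linarith
      · linarith
    have hexp : Complex.exp (α*Complex.I) = Complex.exp (θ*Complex.I) := by
      have h1 : Complex.exp ((α - θ : ℝ)*Complex.I) = 1 := by
        rw [Complex.exp_mul_I]
        rw [show Complex.cos ((α - θ:ℝ):ℂ) = ((Real.cos (α - θ) : ℝ):ℂ) by
          rw [Complex.ofReal_cos],
          show Complex.sin ((α - θ:ℝ):ℂ) = ((Real.sin (α - θ) : ℝ):ℂ) by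
          rw [Complex.ofReal_sin], hcos, hsin]
        simp
      calc Complex.exp (α*Complex.I)
          = Complex.exp (θ*Complex.I) * Complex.exp ((α - θ : ℝ)*Complex.I) := by
            rw [← Complex.exp_add]
            congr 1
            push_cast
            ring
      _ = Complex.exp (θ*Complex.I) := by rw [h1, mul_one]
    rw [hx, hpc, hexp, hρeq]
    push_cast
    ring
  · exfalso
    have hcos : Real.cos (α - θ) = -1 := by linarith
    rw [hcosθα, hcos] at hr2
    nlinarith


theorem mainC (a b c : ℂ) {r r₀ : ℝ} (hr : 0 < r) (hrr : r < r₀)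
    (hdisj : Disjoint (segment ℝ a b) (Metric.closedBall c (r₀ - r))) :
    ∃ p q : ℂ, frontier (Metric.closedBall c r₀) ∩
      frontier (segment ℝ a b + Metric.closedBall (0:ℂ) r) ⊆ {p, q} := by
  have hr₀ : 0 < r₀ := hr.trans hrr
  have H : ∀ q ∈ segment ℝ a b, r₀ - r < dist q c := by
    intro q hq
    by_contra hle
    push_neg at hle
    exact (Set.disjoint_left.1 hdisj hq) (Metric.mem_closedBall.2 hle)
  set K := segment ℝ a b + Metric.closedBall (0:ℂ) r with hK
  set S := frontier (Metric.closedBall c r₀) ∩ frontier K with hS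
  have hKcl : IsClosed K := ((isCompact_seg a b).add (isCompact_closedBall 0 r)).isClosed
  have hSc : ∀ x ∈ S, dist x c = r₀ := by
    intro x hx
    have := hx.1
    rw [frontier_closedBall c (ne_of_gt hr₀)] at this
    exact mem_sphere.1 this
  by_cases hA : ∃ x ∈ S, ∃ p ∈ segment ℝ a b, dist x p = r ∧
      (∀ q ∈ segment ℝ a b, dt (x - p) (q - p) ≤ 0) ∧
      ((r₀:ℂ) + (r:ℂ)) * (x - c) = (r₀:ℂ) * (p - c)
  · obtain ⟨x, hxS, p, hp, hd, hobt, hcol⟩ := hA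
    refine ⟨x, x, ?_⟩
    intro y hyS
    simp only [Set.mem_insert_iff, Set.mem_singleton_iff]
    by_contra hne
    push_neg at hne
    have hyK : y ∈ K := hKcl.frontier_subset hyS.2
    exact caseA hr hrr hp hd hobt (hSc x hxS) hcol (hSc y hyS) hne.1 hyK
  · by_contra hcon
    push_neg at hcon
    -- extract three distinct points of S
    obtain ⟨x₁, hx₁S, -⟩ := Set.not_subset.1 (hcon 0 0)
    obtain ⟨x₂, hx₂S, hx₂ne⟩ := Set.not_subset.1 (hcon x₁ x₁)
    obtain ⟨x₃, hx₃S, hx₃ne⟩ := Set.not_subset.1 (hcon x₁ x₂)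
    simp only [Set.mem_insert_iff, Set.mem_singleton_iff] at hx₂ne hx₃ne
    push_neg at hx₂ne hx₃ne
    have h21 : x₂ ≠ x₁ := hx₂ne.1
    have h31 : x₃ ≠ x₁ := hx₃ne.1
    have h32 : x₃ ≠ x₂ := hx₃ne.2
    -- data for each point
    obtain ⟨p₁, hp₁, θ₁, α₁, ρ₁, hd₁, hobt₁, hX₁, hP₁, hρ₁l, hρ₁u⟩ :=
      data hr hrr H (hSc x₁ hx₁S) hx₁S.2
    obtain ⟨p₂, hp₂, θ₂, α₂, ρ₂, hd₂, hobt₂, hX₂, hP₂, hρ₂l, hρ₂u⟩ :=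
      data hr hrr H (hSc x₂ hx₂S) hx₂S.2
    obtain ⟨p₃, hp₃, θ₃, α₃, ρ₃, hd₃, hobt₃, hX₃, hP₃, hρ₃l, hρ₃u⟩ :=
      data hr hrr H (hSc x₃ hx₃S) hx₃S.2
    have hQ₁ : p₁ = c + (ρ₁:ℂ) * Complex.exp (α₁*Complex.I) := hP₁
    have hQ₂ : p₂ = c + (ρ₂:ℂ) * Complex.exp (α₂*Complex.I) := hP₂
    have hQ₃ : p₃ = c + (ρ₃:ℂ) * Complex.exp (α₃*Complex.I) := hP₃
    have hρ₁0 : 0 < ρ₁ := by linarith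
    have hρ₂0 : 0 < ρ₂ := by linarith
    have hρ₃0 : 0 < ρ₃ := by linarith
    have hsin₁ : Real.sin (α₁ - θ₁) ≠ 0 := fun h =>
      hA ⟨x₁, hx₁S, p₁, hp₁, hd₁, hobt₁,
        collinear_of_sin_eq_zero hr hrr hd₁ hX₁ hQ₁ hρ₁l h⟩
    have hsin₂ : Real.sin (α₂ - θ₂) ≠ 0 := fun h =>
      hA ⟨x₂, hx₂S, p₂, hp₂, hd₂, hobt₂,
        collinear_of_sin_eq_zero hr hrr hd₂ hX₂ hQ₂ hρ₂l h⟩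
    have hsin₃ : Real.sin (α₃ - θ₃) ≠ 0 := fun h =>
      hA ⟨x₃, hx₃S, p₃, hp₃, hd₃, hobt₃,
        collinear_of_sin_eq_zero hr hrr hd₃ hX₃ hQ₃ hρ₃l h⟩
    -- cut point
    obtain ⟨φ0, -, hout⟩ := exit_near hr hp₁ hd₁ hobt₁ hX₁ hQ₁ hsin₁ hρ₁0 hr₀ 1 one_pos
    set e : ℂ := Complex.exp (φ0*Complex.I) with hedef
    have he : Complex.abs e = 1 := Complex.abs_exp_ofReal_mul_I φ0
    have heK : c + (r₀:ℂ) * e ∉ K := hout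
    -- distinctness of units and psi values
    have hunit : ∀ φ : ℝ, Complex.abs (Complex.exp (φ*Complex.I)) = 1 :=
      Complex.abs_exp_ofReal_mul_I
    have hEne : ∀ {θ θ' : ℝ} {u v : ℂ}, u ≠ v →
        u = c + (r₀:ℂ) * Complex.exp (θ*Complex.I) →
        v = c + (r₀:ℂ) * Complex.exp (θ'*Complex.I) →
        psi e (Complex.exp (θ*Complex.I)) ≠ psi e (Complex.exp (θ'*Complex.I)) := by
      intro θ θ' u v huv hu hv hpsi
      apply huv
      have := psi_inj (hunit θ) (hunit θ') he hpsi
      rw [hu, hv, this]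
    set ψ₁ := psi e (Complex.exp (θ₁*Complex.I))
    set ψ₂ := psi e (Complex.exp (θ₂*Complex.I))
    set ψ₃ := psi e (Complex.exp (θ₃*Complex.I))
    have hne12 : ψ₁ ≠ ψ₂ := hEne (Ne.symm h21) hX₁ hX₂
    have hne13 : ψ₁ ≠ ψ₃ := hEne (Ne.symm h31) hX₁ hX₃
    have hne23 : ψ₂ ≠ ψ₃ := hEne (Ne.symm h32) hX₂ hX₃
    rcases hne12.lt_or_gt with h12 | h12
    · rcases hne23.lt_or_gt with h23 | h23
      · -- ψ₁ < ψ₂ < ψ₃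
        exact final hr hrr H he heK hp₁ hp₂ hp₃ hd₁ hd₂ hd₃ hobt₂ hX₁ hX₂ hX₃
          hQ₁ hQ₂ hQ₃ hρ₁0 hρ₂0 hρ₃0 hρ₁u hρ₃u hsin₂ h12 h23
      · rcases hne13.lt_or_gt with h13 | h13
        · -- ψ₁ < ψ₃ < ψ₂
          exact final hr hrr H he heK hp₁ hp₃ hp₂ hd₁ hd₃ hd₂ hobt₃ hX₁ hX₃ hX₂
            hQ₁ hQ₃ hQ₂ hρ₁0 hρ₃0 hρ₂0 hρ₁u hρ₂u hsin₃ h13 h23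
        · -- ψ₃ < ψ₁ < ψ₂
          exact final hr hrr H he heK hp₃ hp₁ hp₂ hd₃ hd₁ hd₂ hobt₁ hX₃ hX₁ hX₂
            hQ₃ hQ₁ hQ₂ hρ₃0 hρ₁0 hρ₂0 hρ₃u hρ₂u hsin₁ h13 h12
    · rcases hne13.lt_or_gt with h13 | h13
      · -- ψ₂ < ψ₁ < ψ₃
        exact final hr hrr H he heK hp₂ hp₁ hp₃ hd₂ hd₁ hd₃ hobt₁ hX₂ hX₁ hX₃
          hQ₂ hQ₁ hQ₃ hρ₂0 hρ₁0 hρ₃0 hρ₂u hρ₃u hsin₁ h12 h13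
      · rcases hne23.lt_or_gt with h23 | h23
        · -- ψ₂ < ψ₃ < ψ₁
          exact final hr hrr H he heK hp₂ hp₃ hp₁ hd₂ hd₃ hd₁ hobt₃ hX₂ hX₃ hX₁
            hQ₂ hQ₃ hQ₁ hρ₂0 hρ₃0 hρ₁0 hρ₂u hρ₁u hsin₃ h23 h13
        · -- ψ₃ < ψ₂ < ψ₁
          exact final hr hrr H he heK hp₃ hp₂ hp₁ hd₃ hd₂ hd₁ hobt₂ hX₃ hX₂ hX₁
            hQ₃ hQ₂ hQ₁ hρ₃0 hρ₂0 hρ₁0 hρ₃u hρ₁u hsin₂ h23 h12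

end Stmt10

open Stmt10 in
/-- Pseudo-disk property of a disk and a racetrack: let `K = e ⊕ D(r)` be the Minkowski sum
of a segment `e` with the closed disk of radius `r`, and `D₀` the closed disk of radius
`r₀ > r` centered at `c`, so `D₀ = D₀* ⊕ D(r)` with `D₀*` the disk of radius `r₀ - r` at `c`.
If `D₀* ∩ e = ∅`, then `∂D₀ ∩ ∂K` consists of at most two points. -/
theorem stmt_10 (a b c : EuclideanSpace ℝ (Fin 2)) (r r₀ : ℝ) (hr : 0 < r) (hrr : r < r₀)
    (hdisj : Disjoint (segment ℝ a b) (Metric.closedBall c (r₀ - r))) :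
    ∃ p q : EuclideanSpace ℝ (Fin 2),
      frontier (Metric.closedBall c r₀) ∩
          frontier (segment ℝ a b + Metric.closedBall (0 : EuclideanSpace ℝ (Fin 2)) r) ⊆
        {p, q} := by
  set g : EuclideanSpace ℝ (Fin 2) ≃ₗᵢ[ℝ] ℂ :=
    (Complex.isometryOfOrthonormal (EuclideanSpace.basisFun (Fin 2) ℝ)).symm with hg
  have hseg : ∀ u : EuclideanSpace ℝ (Fin 2),
      u ∈ segment ℝ a b ↔ g u ∈ segment ℝ (g a) (g b) := by
    intro u
    constructor
    · rintro ⟨t₁, t₂, h1, h2, h3, rfl⟩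
      exact ⟨t₁, t₂, h1, h2, h3, by simp [map_add, map_smul]⟩
    · rintro ⟨t₁, t₂, h1, h2, h3, hsum⟩
      refine ⟨t₁, t₂, h1, h2, h3, ?_⟩
      apply g.injective
      rw [← hsum]
      simp [map_add, map_smul]
  have hball : Metric.closedBall c r₀ = g ⁻¹' (Metric.closedBall (g c) r₀) := by
    ext y
    simp only [Metric.mem_closedBall, Set.mem_preimage]
    rw [g.isometry.dist_eq]
  have hKset : segment ℝ a b + Metric.closedBall (0 : EuclideanSpace ℝ (Fin 2)) r
      = g ⁻¹' (segment ℝ (g a) (g b) + Metric.closedBall (0:ℂ) r) := by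
    ext x
    simp only [Set.mem_preimage]
    constructor
    · rintro ⟨u, hu, v, hv, rfl⟩
      refine ⟨g u, (hseg u).1 hu, g v, ?_, by simp [map_add]⟩
      simp only [Metric.mem_closedBall, dist_zero_right] at hv ⊢
      rw [g.norm_map]
      exact hv
    · rintro ⟨u', hu', v', hv', hsum⟩
      refine ⟨g.symm u', ?_, g.symm v', ?_, ?_⟩
      · rw [hseg (g.symm u')]
        simpa using hu'
      · simp only [Metric.mem_closedBall, dist_zero_right] at hv' ⊢
        have : ‖g (g.symm v')‖ = ‖v'‖ := by simp
        rw [← this] at hv'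
        calc ‖g.symm v'‖ = ‖g (g.symm v')‖ := (g.norm_map _).symm
        _ ≤ r := hv'
      · apply g.injective
        rw [map_add]
        simpa using hsum
  have hdisj' : Disjoint (segment ℝ (g a) (g b)) (Metric.closedBall (g c) (r₀ - r)) := by
    rw [Set.disjoint_left]
    intro u' hu' hu2
    have h1 : g.symm u' ∈ segment ℝ a b := by
      rw [hseg (g.symm u')]
      simpa using hu'
    have h2 : g.symm u' ∈ Metric.closedBall c (r₀ - r) := by
      rw [Metric.mem_closedBall, ← g.isometry.dist_eq]
      simpa [Metric.mem_closedBall] using hu2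
    exact (Set.disjoint_left.1 hdisj h1) h2
  obtain ⟨p', q', hpq⟩ := mainC (g a) (g b) (g c) hr hrr hdisj'
  refine ⟨g.symm p', g.symm q', ?_⟩
  intro x hx
  have hx1 : g x ∈ frontier (Metric.closedBall (g c) r₀) := by
    have h1 := hx.1
    rw [hball] at h1
    have h2 := g.toHomeomorph.preimage_frontier (Metric.closedBall (g c) r₀)
    have h3 : frontier (⇑g ⁻¹' Metric.closedBall (g c) r₀)
        = ⇑g ⁻¹' frontier (Metric.closedBall (g c) r₀) := h2.symm
    rw [h3] at h1
    exact h1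
  have hx2 : g x ∈ frontier (segment ℝ (g a) (g b) + Metric.closedBall (0:ℂ) r) := by
    have h2 := hx.2
    rw [hKset] at h2
    have h4 := g.toHomeomorph.preimage_frontier (segment ℝ (g a) (g b) + Metric.closedBall (0:ℂ) r)
    have h5 : frontier (⇑g ⁻¹' (segment ℝ (g a) (g b) + Metric.closedBall (0:ℂ) r))
        = ⇑g ⁻¹' frontier (segment ℝ (g a) (g b) + Metric.closedBall (0:ℂ) r) := h4.symm
    rw [h5] at h2
    exact h2
  have := hpq ⟨hx1, hx2⟩
  simp only [Set.mem_insert_iff, Set.mem_singleton_iff] at this ⊢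
  rcases this with h | h
  · left
    rw [← h]
    simp
  · right
    rw [← h]
    simp
end

section
/- Let ω: X → [0,1] and ω̃: X → [0,1] be two functions on a set X, let ρ > 0, ε = δ/4 with δ ∈ (0,1), and suppose for all q ∈ X: |ω(q) − ω̃(q)| ≤ ε·ω(q) if ω(q) ≥ ρ, and |ω(q) − ω̃(q)| ≤ ε·ρ if ω(q) < ρ. Let q* maximize ω and q̃ maximize ω̃, and assume ω(q*) ≥ ρ. Then ω(q̃) ≥ (1 − δ/2)·ω(q*). -/
/-- Correctness of the depth-approximation step: if `ω'` is a `(ρ, δ/4)`-approximation of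
`ω`, `q*` maximizes `ω`, `q̃` maximizes `ω'`, and `ω(q*) ≥ ρ`, then
`ω(q̃) ≥ (1 − δ/2)·ω(q*)`. -/
theorem stmt_16 (X : Type*) (ω ω' : X → ℝ) (ρ δ : ℝ) (hρ : 0 < ρ)
    (hδ0 : 0 < δ) (hδ1 : δ < 1)
    (hr : ∀ q, ω q ∈ Set.Icc (0 : ℝ) 1) (hr' : ∀ q, ω' q ∈ Set.Icc (0 : ℝ) 1)
    (happrox : ∀ q, (ρ ≤ ω q → |ω q - ω' q| ≤ (δ / 4) * ω q) ∧
      (ω q < ρ → |ω q - ω' q| ≤ (δ / 4) * ρ))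
    (qs qt : X) (hqs : ∀ q, ω q ≤ ω qs) (hqt : ∀ q, ω' q ≤ ω' qt)
    (hρs : ρ ≤ ω qs) :
    (1 - δ / 2) * ω qs ≤ ω qt := by
  have hs := (happrox qs).1 hρs
  have hs' := abs_le.mp hs
  have hst := hqt qs
  have hωs0 : 0 ≤ ω qs := (hr qs).1
  rcases le_or_gt ρ (ω qt) with h | h
  · have ht := abs_le.mp ((happrox qt).1 h)
    nlinarith [hρ.le, mul_nonneg hδ0.le hωs0]
  · have ht := abs_le.mp ((happrox qt).2 h)
    nlinarith [hρ.le]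
end
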